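/- Let F ∈ (ℝ[t])[y] be a polynomial in y with polynomial coefficients in t, let h : ℝ → ℝ be analytic at 0 with F(0, h(0)) = 0 and ∂F/∂y(0, h(0)) ≠ 0, and suppose there exists ε > 0 such that F(t, h(t)) = 0 for all t ∈ [0, ε). Then the formal Taylor series g ∈ ℝ[[t]] of h at 0 satisfies F(t, g(t)) = 0 in the power series ring ℝ[[t]], and g is the unique power series with constant term h(0) and this property. -/

import Mathlib

/-- The function `z r x` from Morikawa's problem, with `Real.sqrt` extended by `0`
on negative inputs. -/
noncomputable def z (r x : ℝ) : ℝ :=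
  Real.sqrt (x ^ 2 +
    (r - x - Real.sqrt (r ^ 2 -
      (2 * Real.sqrt r - x - Real.sqrt (2 * x - x ^ 2)) ^ 2)) ^ 2)

/-- The Morikawa function `μ(r) = inf { z_r(x) : x ∈ [1 − 1/√2, 1] }`. -/
noncomputable def mu (r : ℝ) : ℝ :=
  sInf (z r '' Set.Icc (1 - 1 / Real.sqrt 2) 1)

/-- The auxiliary function `λ(k) = (μ(k²))²`. -/
noncomputable def lam (k : ℝ) : ℝ := (mu (k ^ 2)) ^ 2

/-- Evaluation of `F ∈ (ℝ[t])[y]` at a point `(t, y) ∈ ℝ²`. -/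
noncomputable def evalTY (F : Polynomial (Polynomial ℝ)) (t y : ℝ) : ℝ :=
  Polynomial.eval t (Polynomial.eval (Polynomial.C y) F)

/-- Substitution of a formal power series `g ∈ ℝ[[t]]` for `y` in `F ∈ (ℝ[t])[y]`,
with the polynomial coefficients viewed as power series in `t`. -/
noncomputable def substSeries (F : Polynomial (Polynomial ℝ)) (g : PowerSeries ℝ) :
    PowerSeries ℝ :=
  Polynomial.eval₂ Polynomial.coeToPowerSeries.ringHom g F

/-- The formal Taylor series at `0` of a function `h : ℝ → ℝ`. -/
noncomputable def taylorSeriesAtZero (h : ℝ → ℝ) : PowerSeries ℝ :=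
  PowerSeries.mk fun n => iteratedDeriv n h 0 / n.factorial

open Polynomial PowerSeries Filter Topology

lemma taylorCoeffAtZero (f : ℝ → ℝ) (n : ℕ) :
    PowerSeries.coeff n (taylorSeriesAtZero f) = iteratedDeriv n f 0 / n.factorial := by
  simp [taylorSeriesAtZero]

lemma analyticAt_deriv {f : ℝ → ℝ} {x : ℝ} (h : AnalyticAt ℝ f x) :
    AnalyticAt ℝ (deriv f) x := by
  have h1 : AnalyticAt ℝ (fun y => (ContinuousLinearMap.apply ℝ ℝ (1:ℝ)) (fderiv ℝ f y)) x :=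
    ((ContinuousLinearMap.apply ℝ ℝ (1:ℝ)).analyticAt _).comp h.fderiv
  have : (fun y => (ContinuousLinearMap.apply ℝ ℝ (1:ℝ)) (fderiv ℝ f y)) = deriv f := by
    funext y
    exact fderiv_apply_one_eq_deriv
  rwa [this] at h1

lemma taylor_congr {f g : ℝ → ℝ} (hfg : f =ᶠ[𝓝 (0:ℝ)] g) :
    taylorSeriesAtZero f = taylorSeriesAtZero g := by
  ext n
  rw [taylorCoeffAtZero, taylorCoeffAtZero, hfg.iteratedDeriv_eq n]

lemma taylor_derivativeFun (f : ℝ → ℝ) :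
    PowerSeries.derivativeFun (taylorSeriesAtZero f) = taylorSeriesAtZero (deriv f) := by
  ext n
  erw [PowerSeries.coeff_derivativeFun]
  rw [taylorCoeffAtZero, taylorCoeffAtZero, iteratedDeriv_succ']
  have h1 : ((n+1 : ℕ) : ℝ) ≠ 0 := by positivity
  have h2 : ((n.factorial : ℕ) : ℝ) ≠ 0 := by positivity
  rw [Nat.factorial_succ]
  push_cast
  field_simp

lemma iteratedDeriv_zero_fun (n : ℕ) :
    iteratedDeriv n (fun _ : ℝ => (0:ℝ)) = fun _ => (0:ℝ) := by
  induction n with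
  | zero => simp [iteratedDeriv_zero]
  | succ n ih =>
    rw [iteratedDeriv_succ, ih]
    funext x
    simp

lemma taylor_add {f g : ℝ → ℝ} (hf : AnalyticAt ℝ f 0) (hg : AnalyticAt ℝ g 0) :
    taylorSeriesAtZero (fun t => f t + g t) =
      taylorSeriesAtZero f + taylorSeriesAtZero g := by
  have key : ∀ n : ℕ, ∀ f g : ℝ → ℝ, AnalyticAt ℝ f 0 → AnalyticAt ℝ g 0 →
      iteratedDeriv n (fun t => f t + g t) 0 = iteratedDeriv n f 0 + iteratedDeriv n g 0 := by
    intro n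
    induction n with
    | zero => intro f g _ _; simp [iteratedDeriv_zero]
    | succ n ih =>
      intro f g hf hg
      rw [iteratedDeriv_succ', iteratedDeriv_succ', iteratedDeriv_succ']
      have hev : deriv (fun t => f t + g t) =ᶠ[𝓝 (0:ℝ)] fun t => deriv f t + deriv g t := by
        filter_upwards [hf.eventually_analyticAt, hg.eventually_analyticAt] with t h1 h2
        exact deriv_add h1.differentiableAt h2.differentiableAt
      rw [hev.iteratedDeriv_eq n]
      exact ih _ _ (analyticAt_deriv hf) (analyticAt_deriv hg)
  ext n
  rw [map_add, taylorCoeffAtZero, taylorCoeffAtZero, taylorCoeffAtZero, key n f g hf hg, add_div]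

lemma taylor_mul {f g : ℝ → ℝ} (hf : AnalyticAt ℝ f 0) (hg : AnalyticAt ℝ g 0) :
    taylorSeriesAtZero (fun t => f t * g t) =
      taylorSeriesAtZero f * taylorSeriesAtZero g := by
  have key : ∀ n : ℕ, ∀ f g : ℝ → ℝ, AnalyticAt ℝ f 0 → AnalyticAt ℝ g 0 →
      PowerSeries.coeff n (taylorSeriesAtZero (fun t => f t * g t)) =
        PowerSeries.coeff n (taylorSeriesAtZero f * taylorSeriesAtZero g) := by
    intro n
    induction n with
    | zero =>
      intro f g _ _
      simp only [coeff_zero_eq_constantCoeff_apply, map_mul]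
      simp [taylorSeriesAtZero, ← coeff_zero_eq_constantCoeff_apply,
        PowerSeries.coeff_mk, iteratedDeriv_zero]
    | succ n ih =>
      intro f g hf hg
      have h1 : ((n:ℝ) + 1) ≠ 0 := by positivity
      apply mul_right_cancel₀ h1
      have lhs : PowerSeries.coeff (n+1) (taylorSeriesAtZero (fun t => f t * g t)) * ((n:ℝ)+1)
          = PowerSeries.coeff n
              (PowerSeries.derivativeFun (taylorSeriesAtZero (fun t => f t * g t))) := by
        erw [PowerSeries.coeff_derivativeFun]
      have rhs : PowerSeries.coeff (n+1) (taylorSeriesAtZero f * taylorSeriesAtZero g)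
            * ((n:ℝ)+1)
          = PowerSeries.coeff n
              (PowerSeries.derivativeFun (taylorSeriesAtZero f * taylorSeriesAtZero g)) := by
        erw [PowerSeries.coeff_derivativeFun]
      rw [lhs, rhs, taylor_derivativeFun, PowerSeries.derivativeFun_mul,
        taylor_derivativeFun, taylor_derivativeFun]
      have hev : deriv (fun t => f t * g t) =ᶠ[𝓝 (0:ℝ)]
          fun t => deriv f t * g t + f t * deriv g t := by
        filter_upwards [hf.eventually_analyticAt, hg.eventually_analyticAt] with t h1 h2
        exact deriv_mul h1.differentiableAt h2.differentiableAt
      rw [taylor_congr hev,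
        taylor_add ((analyticAt_deriv hf).fun_mul hg) (hf.fun_mul (analyticAt_deriv hg)), map_add,
        ih _ _ (analyticAt_deriv hf) hg, ih _ _ hf (analyticAt_deriv hg)]
      simp only [smul_eq_mul, map_add]
      ring_nf
  ext n
  exact key n f g hf hg

lemma iteratedDeriv_polyEval (n : ℕ) (p : Polynomial ℝ) :
    iteratedDeriv n (fun x : ℝ => p.eval x) =
      fun x : ℝ => (Polynomial.derivative^[n] p).eval x := by
  induction n generalizing p with
  | zero => simp [iteratedDeriv_zero]
  | succ n ih =>
    rw [iteratedDeriv_succ']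
    have : _root_.deriv (fun x : ℝ => p.eval x) = fun x : ℝ => (Polynomial.derivative p).eval x := by
      funext x; exact Polynomial.deriv (𝕜 := ℝ) p
    rw [this, ih, Function.iterate_succ_apply]

lemma analyticAt_polyEval (p : Polynomial ℝ) (x : ℝ) :
    AnalyticAt ℝ (fun t : ℝ => p.eval t) x := by
  induction p using Polynomial.induction_on with
  | C a => simpa using analyticAt_const (v := a)
  | add p q hp hq => simpa [Polynomial.eval_add] using hp.fun_add hq
  | monomial m a ih =>
    have : (fun t : ℝ => (Polynomial.C a * Polynomial.X ^ (m+1)).eval t)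
        = fun t : ℝ => ((Polynomial.C a * Polynomial.X ^ m).eval t) * t := by
      funext t; simp [pow_succ]; ring
    rw [this]
    exact ih.mul analyticAt_id

lemma taylor_polyEval (p : Polynomial ℝ) :
    taylorSeriesAtZero (fun x : ℝ => p.eval x) = (p : PowerSeries ℝ) := by
  ext n
  have hD : iteratedDeriv n (fun x : ℝ => p.eval x) 0 = (Polynomial.derivative^[n] p).eval 0 := by
    rw [iteratedDeriv_polyEval]
  rw [taylorCoeffAtZero, hD, Polynomial.coeff_coe,
    ← Polynomial.coeff_zero_eq_eval_zero, Polynomial.coeff_iterate_derivative]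
  simp only [zero_add, Nat.descFactorial_self, nsmul_eq_mul]
  have h2 : ((n.factorial : ℕ) : ℝ) ≠ 0 := by positivity
  field_simp

lemma evalTY_eq (G : Polynomial (Polynomial ℝ)) (t y : ℝ) :
    evalTY G t y = Polynomial.eval₂ (Polynomial.evalRingHom t) y G := by
  rw [Polynomial.eval₂_evalRingHom]
  rfl

lemma key_hom (h : ℝ → ℝ) (hh : AnalyticAt ℝ h 0) (F : Polynomial (Polynomial ℝ)) :
    AnalyticAt ℝ (fun t => evalTY F t (h t)) 0 ∧
      taylorSeriesAtZero (fun t => evalTY F t (h t)) =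
        substSeries F (taylorSeriesAtZero h) := by
  induction F using Polynomial.induction_on with
  | C p =>
    have e : (fun t => evalTY (Polynomial.C p) t (h t)) = fun t : ℝ => p.eval t := by
      funext t; simp [evalTY]
    rw [e]
    refine ⟨analyticAt_polyEval p 0, ?_⟩
    rw [taylor_polyEval, substSeries, Polynomial.eval₂_C,
      Polynomial.coeToPowerSeries.ringHom_apply]
  | add p q hp hq =>
    have e : (fun t => evalTY (p + q) t (h t))
        = fun t => evalTY p t (h t) + evalTY q t (h t) := by
      funext t; simp [evalTY]
    rw [e]
    refine ⟨hp.1.add hq.1, ?_⟩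
    rw [taylor_add hp.1 hq.1, hp.2, hq.2, substSeries, substSeries, substSeries,
      Polynomial.eval₂_add]
  | monomial m a ih =>
    have e : (fun t => evalTY (Polynomial.C a * Polynomial.X ^ (m+1)) t (h t))
        = fun t => evalTY (Polynomial.C a * Polynomial.X ^ m) t (h t) * h t := by
      funext t; simp [evalTY, pow_succ]; ring
    rw [e]
    refine ⟨ih.1.mul hh, ?_⟩
    rw [taylor_mul ih.1 hh, ih.2, substSeries, substSeries,
      Polynomial.eval₂_mul, Polynomial.eval₂_mul, Polynomial.eval₂_pow,
      Polynomial.eval₂_pow, Polynomial.eval₂_X, pow_succ, mul_assoc]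

theorem taylor_series_root_of_hensel
    (F : Polynomial (Polynomial ℝ)) (h : ℝ → ℝ)
    (hh : AnalyticAt ℝ h 0)
    (hF0 : evalTY F 0 (h 0) = 0)
    (hFy : evalTY (Polynomial.derivative F) 0 (h 0) ≠ 0)
    (hroot : ∃ ε > (0 : ℝ), ∀ t ∈ Set.Ico (0 : ℝ) ε, evalTY F t (h t) = 0) :
    substSeries F (taylorSeriesAtZero h) = 0 ∧
      ∀ g' : PowerSeries ℝ, PowerSeries.constantCoeff g' = h 0 →
        substSeries F g' = 0 → g' = taylorSeriesAtZero h := by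
  obtain ⟨ε, hε, hr⟩ := hroot
  obtain ⟨hA, hT⟩ := key_hom h hh F
  set Φ := fun t => evalTY F t (h t) with hΦ
  -- Φ vanishes eventually near 0
  have hfreq : ∃ᶠ t in 𝓝[≠] (0:ℝ), Φ t = 0 := by
    have h1 : ∀ᶠ t in 𝓝[>] (0:ℝ), Φ t = 0 := by
      filter_upwards [Ioo_mem_nhdsGT_of_mem (Set.mem_Ico.mpr ⟨le_refl (0:ℝ), hε⟩)] with t ht
      exact hr t ⟨ht.1.le, ht.2⟩
    exact h1.frequently.filter_mono
      (nhdsWithin_mono 0 (fun x hx => (ne_of_gt hx : x ≠ 0)))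
  have hev : ∀ᶠ t in 𝓝 (0:ℝ), Φ t = 0 := hA.frequently_zero_iff_eventually_zero.mp hfreq
  have hev' : Φ =ᶠ[𝓝 (0:ℝ)] fun _ => (0:ℝ) := hev
  have hT0 : taylorSeriesAtZero Φ = 0 := by
    rw [taylor_congr hev']
    ext n
    rw [taylorCoeffAtZero, iteratedDeriv_zero_fun]
    simp
  have hmain : substSeries F (taylorSeriesAtZero h) = 0 := by rw [← hT]; exact hT0
  refine ⟨hmain, ?_⟩
  intro g' hc hg'
  set g := taylorSeriesAtZero h with hg
  have hcg : PowerSeries.constantCoeff g = h 0 := by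
    rw [← coeff_zero_eq_constantCoeff_apply, hg, taylorCoeffAtZero]
    simp
  set φ : Polynomial ℝ →+* PowerSeries ℝ := Polynomial.coeToPowerSeries.ringHom with hφdef
  set P : Polynomial (PowerSeries ℝ) := F.map φ with hP
  have hsub : ∀ x : PowerSeries ℝ, substSeries F x = P.eval x := by
    intro x
    rw [substSeries, hP, Polynomial.eval_map]
  obtain ⟨k, hk⟩ := P.binomExpansion g (g' - g)
  have hgg : g + (g' - g) = g' := by ring
  rw [hgg] at hk
  rw [← hsub, hg'] at hk
  have hPg : P.eval g = 0 := by rw [← hsub]; exact hmain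
  rw [hPg, zero_add] at hk
  -- hk : 0 = derivative P |>.eval g * (g' - g) + k * (g' - g)^2
  have h2 : (g' - g) * (Polynomial.eval g (Polynomial.derivative P) + k * (g' - g)) = 0 := by
    linear_combination -hk
  -- the second factor has nonzero constant coefficient
  have hcomp : (PowerSeries.constantCoeff).comp φ = Polynomial.evalRingHom (0:ℝ) := by
    apply Polynomial.ringHom_ext <;>
      simp [hφdef, Polynomial.coe_C, Polynomial.coe_X]
  have hconst : PowerSeries.constantCoeff
      (Polynomial.eval g (Polynomial.derivative P) + k * (g' - g))
      = evalTY (Polynomial.derivative F) 0 (h 0) := by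
    rw [map_add, map_mul, map_sub, hc, hcg, sub_self, mul_zero, add_zero]
    rw [hP, Polynomial.derivative_map, Polynomial.eval_map,
      Polynomial.hom_eval₂, hcomp, hcg, evalTY_eq]
  have hne : Polynomial.eval g (Polynomial.derivative P) + k * (g' - g) ≠ 0 := by
    intro hzero
    rw [hzero, map_zero] at hconst
    exact hFy hconst.symm
  have := mul_eq_zero.mp h2
  rcases this with h3 | h3
  · exact sub_eq_zero.mp h3
  · exact absurd h3 hne
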